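/- Let m be odd, and let a_1,…,a_v be real numbers with σ_u(a_1,…,a_v) ≥ 0 for all u, and suppose Σ_m(a_1,…,a_v) = 0. Then for every pair of nonnegative integers (u, v') with u + 2v' = m, one has σ_u(a_1,…,a_v) · Σ_{v'}(a_1²,…,a_v²) = 0. -/

import Mathlib

open MvPolynomial PowerSeries

/-- List version of elementary symmetric functions. -/
def ee : List ℝ → ℕ → ℝ
  | _, 0 => 1
  | [], _+1 => 0
  | x::l, n+1 => ee l (n+1) + x * ee l n

/-- List version of complete homogeneous symmetric functions. -/
def hh : List ℝ → ℕ → ℝ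
  | _, 0 => 1
  | [], _+1 => 0
  | x::l, n+1 => hh l (n+1) + x * hh (x::l) n

@[simp] lemma ee_zero (l : List ℝ) : ee l 0 = 1 := by cases l <;> rfl
@[simp] lemma hh_zero (l : List ℝ) : hh l 0 = 1 := by cases l <;> simp [hh]
@[simp] lemma ee_nil_succ (n : ℕ) : ee [] (n+1) = 0 := rfl
@[simp] lemma hh_nil_succ (n : ℕ) : hh [] (n+1) = 0 := by simp [hh]
lemma ee_cons_succ (x : Real) (l : List ℝ) (n : ℕ) :
    ee (x::l) (n+1) = ee l (n+1) + x * ee l n := rfl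
lemma hh_cons_succ (x : Real) (l : List ℝ) (n : ℕ) :
    hh (x::l) (n+1) = hh l (n+1) + x * hh (x::l) n := by rw [hh]

lemma hh_nonneg {l : List ℝ} (hl : ∀ x ∈ l, 0 ≤ x) : ∀ n, 0 ≤ hh l n := by
  induction l with
  | nil => intro n; cases n <;> simp
  | cons x l ih =>
    have hx : 0 ≤ x := hl x List.mem_cons_self
    have hl' : ∀ y ∈ l, 0 ≤ y := fun y hy => hl y (List.mem_cons_of_mem _ hy)
    intro n
    induction n with
    | zero => simp
    | succ n ihn =>
      rw [hh_cons_succ]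
      exact add_nonneg (ih hl' _) (mul_nonneg hx ihn)
noncomputable def Ee (l : List ℝ) : PowerSeries ℝ := PowerSeries.mk (ee l)
noncomputable def Hh (l : List ℝ) : PowerSeries ℝ := PowerSeries.mk (hh l)
noncomputable def Hq (l : List ℝ) : PowerSeries ℝ :=
  PowerSeries.mk fun n => if 2 ∣ n then hh (l.map (· ^ 2)) (n / 2) else 0

lemma Ee_cons (x : ℝ) (l : List ℝ) :
    Ee (x :: l) = (1 + PowerSeries.C x * PowerSeries.X) * Ee l := by
  ext n
  rw [add_mul, one_mul, mul_assoc, map_add, PowerSeries.coeff_C_mul]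
  cases n with
  | zero => simp [Ee]
  | succ n =>
    rw [mul_comm PowerSeries.X, PowerSeries.coeff_succ_mul_X]
    simp [Ee, ee_cons_succ]

lemma Hh_cons (x : ℝ) (l : List ℝ) :
    (1 - PowerSeries.C x * PowerSeries.X) * Hh (x :: l) = Hh l := by
  ext n
  rw [sub_mul, one_mul, mul_assoc, map_sub, PowerSeries.coeff_C_mul]
  cases n with
  | zero => simp [Hh]
  | succ n =>
    rw [mul_comm PowerSeries.X, PowerSeries.coeff_succ_mul_X]
    simp [Hh, hh_cons_succ]

lemma Hq_cons (x : ℝ) (l : List ℝ) :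
    (1 - PowerSeries.C (x ^ 2) * PowerSeries.X ^ 2) * Hq (x :: l) = Hq l := by
  ext n
  rw [sub_mul, one_mul, mul_assoc, map_sub, PowerSeries.coeff_C_mul,
    PowerSeries.coeff_X_pow_mul']
  match n with
  | 0 => simp [Hq]
  | 1 => norm_num [Hq]
  | (n+2) =>
    rw [if_pos (by omega : 2 ≤ n + 2)]
    simp only [Hq, coeff_mk, Nat.add_sub_cancel, List.map_cons]
    by_cases h1 : 2 ∣ n
    · rw [if_pos h1, if_pos (by omega : 2 ∣ n + 2), if_pos (by omega : 2 ∣ n + 2),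
        (by omega : (n + 2) / 2 = n / 2 + 1), hh_cons_succ]
      ring
    · rw [if_neg h1, if_neg (by omega : ¬ 2 ∣ n + 2), if_neg (by omega : ¬ 2 ∣ n + 2)]
      ring

lemma one_sub_ne_zero (x : ℝ) : (1 - PowerSeries.C x * PowerSeries.X) ≠ 0 := by
  intro h
  have := congrArg (PowerSeries.constantCoeff) h
  simp at this

lemma key (l : List ℝ) : Hh l = Ee l * Hq l := by
  induction l with
  | nil =>
    have h1 : Hh [] = 1 := by
      ext n; cases n <;> simp [Hh, PowerSeries.coeff_one]
    have h2 : Ee [] = 1 := by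
      ext n; cases n <;> simp [Ee, PowerSeries.coeff_one]
    have h3 : Hq [] = 1 := by
      ext n
      rw [PowerSeries.coeff_one]
      simp only [Hq, coeff_mk, List.map_nil]
      match n with
      | 0 => norm_num
      | (n+1) =>
        rw [if_neg (by omega : ¬ n + 1 = 0)]
        split_ifs with h'
        · obtain ⟨k, hk⟩ := h'
          rw [(by omega : (n + 1) / 2 = (k - 1) + 1), hh_nil_succ]
        · rfl
    rw [h1, h2, h3, one_mul]
  | cons x l ih =>
    apply mul_left_cancel₀ (one_sub_ne_zero x)
    rw [Hh_cons, Ee_cons]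
    have expand : (1 - PowerSeries.C x * PowerSeries.X) *
        ((1 + PowerSeries.C x * PowerSeries.X) * Ee l * Hq (x :: l)) =
        Ee l * ((1 - PowerSeries.C (x^2) * PowerSeries.X ^ 2) * Hq (x :: l)) := by
      rw [map_pow]
      ring
    rw [expand, Hq_cons, ih]
lemma G_equiv {σ τ : Type*} [Fintype σ] [Fintype τ] [DecidableEq σ] [DecidableEq τ]
    (e : σ ≃ τ) (f : τ → ℝ) (n : ℕ) :
    ∑ s : Sym σ n, ((s : Multiset σ).map (f ∘ e)).prod
      = ∑ s : Sym τ n, ((s : Multiset τ).map f).prod := by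
  rw [← Equiv.sum_comp (Sym.equivCongr e (n := n))]
  refine Finset.sum_congr rfl fun s _ => ?_
  simp [Sym.equivCongr, Sym.coe_map, Multiset.map_map]

lemma G_zero {σ : Type*} [Fintype σ] [DecidableEq σ] (f : σ → ℝ) :
    ∑ s : Sym σ 0, ((s : Multiset σ).map f).prod = 1 := by
  rw [Fintype.sum_unique]
  have : ((default : Sym σ 0) : Multiset σ) = 0 := rfl
  rw [this]
  simp

lemma G_option {σ : Type*} [Fintype σ] [DecidableEq σ] (f : Option σ → ℝ) (n : ℕ) :
    ∑ s : Sym (Option σ) (n+1), ((s : Multiset (Option σ)).map f).prod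
      = (∑ s : Sym σ (n+1), ((s : Multiset σ).map (f ∘ some)).prod)
        + f none * ∑ s : Sym (Option σ) n, ((s : Multiset (Option σ)).map f).prod := by
  rw [← Equiv.sum_comp (symOptionSuccEquiv (α := σ)).symm, Fintype.sum_sum_type]
  rw [add_comm, Finset.mul_sum]
  congr 1
  · refine Finset.sum_congr rfl fun s _ => ?_
    show ((SymOptionSuccEquiv.decode (Sum.inr s) : Multiset (Option σ)).map f).prod = _
    rw [SymOptionSuccEquiv.decode_inr, Sym.coe_map, Multiset.map_map]
    rfl
  · refine Finset.sum_congr rfl fun s _ => ?_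
    show ((SymOptionSuccEquiv.decode (Sum.inl s) : Multiset (Option σ)).map f).prod = _
    rw [SymOptionSuccEquiv.decode_inl, Sym.coe_cons, Multiset.map_cons, Multiset.prod_cons]

lemma G_hh : ∀ (v : ℕ) (a : Fin v → ℝ) (n : ℕ),
    ∑ s : Sym (Fin v) n, ((s : Multiset (Fin v)).map a).prod = hh (List.ofFn a) n := by
  intro v
  induction v with
  | zero =>
    intro a n
    cases n with
    | zero => rw [G_zero]; simp
    | succ n =>
      rw [List.ofFn_zero, hh_nil_succ, Finset.univ_eq_empty, Finset.sum_empty]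
  | succ v ih =>
    intro a n
    induction n with
    | zero => rw [G_zero]; simp
    | succ n ihn =>
      rw [← G_equiv ((finSuccEquiv v).symm) a (n+1), G_option,
        G_equiv ((finSuccEquiv v).symm) a n, ihn]
      have h1 : (a ∘ (finSuccEquiv v).symm) none = a 0 := by simp
      have h2 : (a ∘ (finSuccEquiv v).symm) ∘ some = fun i => a i.succ := by
        funext i; simp
      rw [h1, h2, ih (fun i => a i.succ) (n+1), List.ofFn_succ, hh_cons_succ]
lemma eval_hsymm (v n : ℕ) (a : Fin v → ℝ) :
    eval a (hsymm (Fin v) ℝ n) = hh (List.ofFn a) n := by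
  rw [← G_hh, hsymm, map_sum]
  refine Finset.sum_congr rfl fun s _ => ?_
  rw [map_multiset_prod, Multiset.map_map]
  simp

lemma msymm_cons (x : ℝ) (s : Multiset ℝ) (n : ℕ) :
    (x ::ₘ s).esymm (n+1) = s.esymm (n+1) + x * s.esymm n := by
  rw [Multiset.esymm, Multiset.esymm, Multiset.esymm, Multiset.powersetCard_cons,
    Multiset.map_add, Multiset.sum_add, Multiset.map_map]
  congr 1
  rw [← Multiset.sum_map_mul_left]
  refine congrArg _ (Multiset.map_congr rfl fun t _ => ?_)
  simp [Multiset.prod_cons]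

lemma ee_eq (l : List ℝ) : ∀ u, (↑l : Multiset ℝ).esymm u = ee l u := by
  induction l with
  | nil =>
    intro u
    cases u with
    | zero => simp [Multiset.esymm]
    | succ u => simp [Multiset.esymm, Multiset.powersetCard_zero_right]
  | cons x l ih =>
    intro u
    cases u with
    | zero => simp [Multiset.esymm]
    | succ u =>
      rw [ee_cons_succ, ← ih, ← ih, ← Multiset.cons_coe, msymm_cons]

lemma eval_esymm (v u : ℕ) (a : Fin v → ℝ) :
    eval a (esymm (Fin v) ℝ u) = ee (List.ofFn a) u := by
  rw [← ee_eq, ← Fin.univ_val_map, Finset.esymm_map_val, esymm, map_sum]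
  refine Finset.sum_congr rfl fun t _ => ?_
  rw [eval_prod]
  simp

lemma hh_eq_sum (l : List ℝ) (m : ℕ) :
    hh l m = ∑ p ∈ Finset.HasAntidiagonal.antidiagonal m,
      ee l p.1 * (if 2 ∣ p.2 then hh (l.map (· ^ 2)) (p.2 / 2) else 0) := by
  have h := congrArg (PowerSeries.coeff m) (key l)
  simpa [Hh, Ee, Hq, PowerSeries.coeff_mul] using h

/-- If `m` is odd, all elementary symmetric polynomials of the real numbers `a_i` are
nonnegative, and `Σ_m(a) = 0`, then each summand `σ_u(a) · Σ_{v'}(a²)` with `u + 2v' = m`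
vanishes. -/
theorem summand_eq_zero_of_hsymm_eq_zero (m v : ℕ) (hm : Odd m) (a : Fin v → ℝ)
    (he : ∀ u, 0 ≤ eval a (esymm (Fin v) ℝ u))
    (h0 : eval a (hsymm (Fin v) ℝ m) = 0) :
    ∀ u v', u + 2 * v' = m →
      eval a (esymm (Fin v) ℝ u) * eval (fun i => a i ^ 2) (hsymm (Fin v) ℝ v') = 0 := by
  intro u v' huv
  set l := List.ofFn a with hl
  have hsq : ∀ y ∈ l.map (· ^ 2), (0:ℝ) ≤ y := by
    intro y hy
    obtain ⟨x, -, rfl⟩ := List.mem_map.mp hy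
    positivity
  have hterm : ∀ p ∈ Finset.HasAntidiagonal.antidiagonal m,
      0 ≤ ee l p.1 * (if 2 ∣ p.2 then hh (l.map (· ^ 2)) (p.2 / 2) else 0) := by
    intro p _
    refine mul_nonneg ?_ ?_
    · rw [← eval_esymm]; exact he p.1
    · split_ifs with h
      · exact hh_nonneg hsq _
      · exact le_refl 0
  have hsum : ∑ p ∈ Finset.HasAntidiagonal.antidiagonal m,
      ee l p.1 * (if 2 ∣ p.2 then hh (l.map (· ^ 2)) (p.2 / 2) else 0) = 0 := by
    rw [← hh_eq_sum, ← eval_hsymm]; exact h0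
  have hmem : (u, 2 * v') ∈ Finset.HasAntidiagonal.antidiagonal m := by
    simpa using huv
  have h := (Finset.sum_eq_zero_iff_of_nonneg hterm).mp hsum (u, 2 * v') hmem
  rw [if_pos ⟨v', rfl⟩] at h
  have hdiv : 2 * v' / 2 = v' := by omega
  rw [hdiv] at h
  rw [eval_esymm, eval_hsymm]
  have : List.ofFn (fun i => a i ^ 2) = l.map (· ^ 2) := by
    rw [hl, List.map_ofFn]; rfl
  rw [this]
  exact h
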